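/- Let m ≥ 1 be an integer, g, Δ, ε real, λ := 2m − g² − ε, and μ := (λ+g²)² − 4g²(λ+g²) − Δ². Consider the non-spherical principal series action ϖ_{2,a} with a = 1−2m, and let K̃ be the operator (½H − E + (−½ − m))∘(F + 4g²) + (−m + ε)(H − ½) + (μ − 4εg² − ε²) on V, and Λ̃ := 4g²(a/2 − ½ − m) + (−m + ε)(a − ½). Then for every finitely supported family (c_n)_{n∈ℤ} of complex numbers with c_n = 0 unless −m ≤ n ≤ m−1, the vector ν = Σ_n c_n e_n satisfies K̃ν = Λ̃ν if and only if for every n ∈ ℤ: (m+n+1)(m−n)·c_{n+1} + [(m−n)² − 4g²(m−n) − Δ² − 2ε(m−n)]·c_n + 4g²(m−n)·c_{n−1} = 0. -/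
import Mathlib


/-- The space `V` of finitely supported functions `ℤ → ℂ`. -/
abbrev Vsl2 : Type := ℤ →₀ ℂ

/-- The standard basis vectors `e n` of `V`. -/
noncomputable def eV (n : ℤ) : Vsl2 := Finsupp.single n 1

/-- The operator `H` of the spherical principal series `ϖ_{1,a}`: `H e_n = 2n·e_n`. -/
noncomputable def Hsph : Vsl2 →ₗ[ℂ] Vsl2 :=
  Finsupp.lsum ℂ fun n => (2 * (n : ℂ)) • Finsupp.lsingle n

/-- The operator `E` of the spherical principal series `ϖ_{1,a}`: `E e_n = (n + a/2)·e_{n+1}`. -/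
noncomputable def Esph (a : ℂ) : Vsl2 →ₗ[ℂ] Vsl2 :=
  Finsupp.lsum ℂ fun n => ((n : ℂ) + a / 2) • Finsupp.lsingle (n + 1)

/-- The operator `F` of the spherical principal series `ϖ_{1,a}`: `F e_n = (−n + a/2)·e_{n−1}`. -/
noncomputable def Fsph (a : ℂ) : Vsl2 →ₗ[ℂ] Vsl2 :=
  Finsupp.lsum ℂ fun n => (-(n : ℂ) + a / 2) • Finsupp.lsingle (n - 1)

/-- The operator `H` of the non-spherical principal series `ϖ_{2,a}`: `H e_n = (2n+1)·e_n`. -/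
noncomputable def Hnsph : Vsl2 →ₗ[ℂ] Vsl2 :=
  Finsupp.lsum ℂ fun n => (2 * (n : ℂ) + 1) • Finsupp.lsingle n

/-- The operator `E` of the non-spherical principal series `ϖ_{2,a}`:
`E e_n = (n + (a+1)/2)·e_{n+1}`. -/
noncomputable def Ensph (a : ℂ) : Vsl2 →ₗ[ℂ] Vsl2 :=
  Finsupp.lsum ℂ fun n => ((n : ℂ) + (a + 1) / 2) • Finsupp.lsingle (n + 1)

/-- The operator `F` of the non-spherical principal series `ϖ_{2,a}`:
`F e_n = (−n + (a−1)/2)·e_{n−1}`. -/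
noncomputable def Fnsph (a : ℂ) : Vsl2 →ₗ[ℂ] Vsl2 :=
  Finsupp.lsum ℂ fun n => (-(n : ℂ) + (a - 1) / 2) • Finsupp.lsingle (n - 1)

/-- The operator `(½H − E + α)∘(F + β) + γ(H − ½) + C` built from operators `Hop`, `Eop`,
`Fop` on `V`, scalars acting as scalar multiples of the identity. -/
noncomputable def Kop (Hop Eop Fop : Vsl2 →ₗ[ℂ] Vsl2) (α β γ C : ℂ) : Vsl2 →ₗ[ℂ] Vsl2 :=
  ((1 / 2 : ℂ) • Hop - Eop + α • LinearMap.id) ∘ₗ (Fop + β • LinearMap.id) +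
    γ • (Hop - (1 / 2 : ℂ) • LinearMap.id) + C • LinearMap.id

lemma Hnsph_apply (ν : Vsl2) (n : ℤ) : Hnsph ν n = (2 * (n : ℂ) + 1) * ν n := by
  rw [Hnsph, Finsupp.lsum_apply, Finsupp.sum_apply, Finsupp.sum]
  rw [Finset.sum_eq_single n]
  · simp only [LinearMap.smul_apply, Finsupp.lsingle_apply, Finsupp.smul_apply,
      Finsupp.single_apply, smul_eq_mul, if_true]
  · intro b _ hb
    simp only [LinearMap.smul_apply, Finsupp.lsingle_apply, Finsupp.smul_apply,
      Finsupp.single_apply, smul_eq_mul]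
    rw [if_neg hb]; ring
  · intro h
    rw [Finsupp.notMem_support_iff] at h
    simp only [h, map_zero, smul_zero, Finsupp.coe_zero, Pi.zero_apply, mul_zero]

lemma Ensph_apply (a : ℂ) (ν : Vsl2) (n : ℤ) :
    Ensph a ν n = ((n : ℂ) - 1 + (a + 1) / 2) * ν (n - 1) := by
  rw [Ensph, Finsupp.lsum_apply, Finsupp.sum_apply, Finsupp.sum]
  rw [Finset.sum_eq_single (n - 1)]
  · simp only [LinearMap.smul_apply, Finsupp.lsingle_apply, Finsupp.smul_apply,
      Finsupp.single_apply, smul_eq_mul]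
    rw [if_pos (by omega)]
    push_cast; ring
  · intro b _ hb
    simp only [LinearMap.smul_apply, Finsupp.lsingle_apply, Finsupp.smul_apply,
      Finsupp.single_apply, smul_eq_mul]
    rw [if_neg (by omega)]; ring
  · intro h
    rw [Finsupp.notMem_support_iff] at h
    simp only [h, map_zero, smul_zero, Finsupp.coe_zero, Pi.zero_apply, mul_zero]

lemma Fnsph_apply (a : ℂ) (ν : Vsl2) (n : ℤ) :
    Fnsph a ν n = (-(n : ℂ) - 1 + (a - 1) / 2) * ν (n + 1) := by
  rw [Fnsph, Finsupp.lsum_apply, Finsupp.sum_apply, Finsupp.sum]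
  rw [Finset.sum_eq_single (n + 1)]
  · simp only [LinearMap.smul_apply, Finsupp.lsingle_apply, Finsupp.smul_apply,
      Finsupp.single_apply, smul_eq_mul]
    rw [if_pos (by omega)]
    push_cast; ring
  · intro b _ hb
    simp only [LinearMap.smul_apply, Finsupp.lsingle_apply, Finsupp.smul_apply,
      Finsupp.single_apply, smul_eq_mul]
    rw [if_neg (by omega)]; ring
  · intro h
    rw [Finsupp.notMem_support_iff] at h
    simp only [h, map_zero, smul_zero, Finsupp.coe_zero, Pi.zero_apply, mul_zero]

/-- Non-spherical `ϖ_{2,1−2m}`-eigenproblem for `K̃` on `F_{2m}` (the case `λ = 2m − g² − ε`):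
the eigenvalue equation `K̃ν = Λ̃ν` for `ν = Σ c_n e_n` supported in `−m ≤ n ≤ m−1` is
equivalent to the three-term recurrence
`(m+n+1)(m−n)c_{n+1} + [(m−n)² − 4g²(m−n) − Δ² − 2ε(m−n)]c_n + 4g²(m−n)c_{n−1} = 0`. -/
theorem nonspherical_Ktilde_eigenproblem (m : ℤ) (hm : 1 ≤ m) (g Δ ε : ℝ)
    (lam : ℝ) (hlam : lam = 2 * m - g ^ 2 - ε)
    (μ : ℝ) (hμ : μ = (lam + g ^ 2) ^ 2 - 4 * g ^ 2 * (lam + g ^ 2) - Δ ^ 2)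
    (a : ℝ) (ha : a = 1 - 2 * m)
    (Kt : Vsl2 →ₗ[ℂ] Vsl2)
    (hKt : Kt = Kop Hnsph (Ensph (a : ℂ)) (Fnsph (a : ℂ))
      (-(1 / 2) - (m : ℂ)) ((4 * g ^ 2 : ℝ) : ℂ) ((-(m : ℝ) + ε : ℝ) : ℂ)
      ((μ - 4 * ε * g ^ 2 - ε ^ 2 : ℝ) : ℂ))
    (Λt : ℝ) (hΛt : Λt = 4 * g ^ 2 * (a / 2 - 1 / 2 - m) + (-m + ε) * (a - 1 / 2))
    (ν : Vsl2) (hsupp : ∀ n : ℤ, (n < -m ∨ m - 1 < n) → ν n = 0) :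
    Kt ν = (Λt : ℂ) • ν ↔
      ∀ n : ℤ,
        ((m : ℂ) + n + 1) * ((m : ℂ) - n) * ν (n + 1) +
          (((m : ℂ) - n) ^ 2 - 4 * (g : ℂ) ^ 2 * ((m : ℂ) - n) - (Δ : ℂ) ^ 2 -
            2 * (ε : ℂ) * ((m : ℂ) - n)) * ν n +
          4 * (g : ℂ) ^ 2 * ((m : ℂ) - n) * ν (n - 1) = 0 := by
  subst hlam hμ ha hΛt hKt
  have hpt : ∀ n : ℤ,
      Kop Hnsph (Ensph ((1 - 2 * (m : ℝ) : ℝ) : ℂ)) (Fnsph ((1 - 2 * (m : ℝ) : ℝ) : ℂ))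
          (-(1 / 2) - (m : ℂ)) ((4 * g ^ 2 : ℝ) : ℂ) ((-(m : ℝ) + ε : ℝ) : ℂ)
          (((2 * (m : ℝ) - g ^ 2 - ε + g ^ 2) ^ 2 - 4 * g ^ 2 * (2 * (m : ℝ) - g ^ 2 - ε + g ^ 2)
            - Δ ^ 2 - 4 * ε * g ^ 2 - ε ^ 2 : ℝ) : ℂ) ν n -
        ((4 * g ^ 2 * ((1 - 2 * (m : ℝ)) / 2 - 1 / 2 - (m : ℝ)) +
          (-(m : ℝ) + ε) * (1 - 2 * (m : ℝ) - 1 / 2) : ℝ) : ℂ) * ν n =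
        ((m : ℂ) + n + 1) * ((m : ℂ) - n) * ν (n + 1) +
          (((m : ℂ) - n) ^ 2 - 4 * (g : ℂ) ^ 2 * ((m : ℂ) - n) - (Δ : ℂ) ^ 2 -
            2 * (ε : ℂ) * ((m : ℂ) - n)) * ν n +
          4 * (g : ℂ) ^ 2 * ((m : ℂ) - n) * ν (n - 1) := by
    intro n
    simp only [Kop, LinearMap.add_apply, LinearMap.comp_apply, LinearMap.sub_apply,
      LinearMap.smul_apply, LinearMap.id_apply, Finsupp.add_apply, Finsupp.sub_apply,
      Finsupp.smul_apply, smul_eq_mul, Hnsph_apply, Ensph_apply, Fnsph_apply,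
      sub_add_cancel_right, sub_add_cancel]
    push_cast
    ring
  constructor
  · intro h n
    have := congrArg (fun (x : Vsl2) => x n) h
    simp only [Finsupp.smul_apply, smul_eq_mul] at this
    rw [← hpt n, this]
    ring
  · intro h
    ext n
    have := hpt n
    rw [h n] at this
    have h2 := sub_eq_zero.mp this
    simpa [Finsupp.smul_apply, smul_eq_mul] using h2
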